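/- There exist δ₀ ∈ (0,1) and ε₀ ∈ (0,1) such that for all δ ∈ (δ₀,1) and all ε ∈ (0,ε₀): V_{n−1}(ε,δ) > V_n^inv(ε,δ), and V_{n−1}(ε,δ) > V_{k'}^inv(ε,δ) for every k' ∈ {0,…,n−2}. That is, with a positive but sufficiently small mistake probability and sufficiently likely repetition, the least tolerant conditional cooperative strategy T_{n−1} is evolutionarily stable against defectors and against all more tolerant conditional cooperators. -/

import Mathlib

open Finset

/-- `ψ(j,q,ε) = (j choose q)·ε^q·(1−ε)^(j−q)`. -/
noncomputable def psi (j q : ℕ) (ε : ℝ) : ℝ :=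
  (j.choose q : ℝ) * ε ^ q * (1 - ε) ^ (j - q)

/-- One-shot expected payoff of cooperation against `n−1` error-prone cooperators. -/
noncomputable def FC (n : ℕ) (b c ε : ℝ) : ℝ :=
  (1 - ε) * ∑ q ∈ range n, psi (n - 1) q ε * (b * ((n : ℝ) - q) / n - c) +
    ε * ∑ q ∈ range n, psi (n - 1) q ε * (b * ((n : ℝ) - 1 - q) / n)

/-- One-shot expected payoff of defection against `n−1` error-prone cooperators. -/
noncomputable def FD (n : ℕ) (b ε : ℝ) : ℝ :=
  ∑ q ∈ range n, psi (n - 1) q ε * (b * ((n : ℝ) - 1 - q) / n)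

/-- Repeated-game payoff of the incumbent `T_{n−1}` strategy in a `T_{n−1}` population. -/
noncomputable def Vincumbent (n : ℕ) (b c ε δ : ℝ) : ℝ :=
  FC n b c ε / (1 - (1 - ε) ^ n * δ)

/-- Repeated-game payoff of a single defector (`T_n`) mutant in a `T_{n−1}` population. -/
noncomputable def VdefectorInv (n : ℕ) (b ε : ℝ) : ℝ := FD n b ε

/-- Repeated-game payoff of a single more tolerant `T_{k'}` mutant (`k' < n−1`)
in a `T_{n−1}` population. -/
noncomputable def VtolerantInv (n k' : ℕ) (b c ε δ : ℝ) : ℝ :=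
  (FC n b c ε + δ * (1 - ε) * (b / n - c) * ∑ q ∈ Icc 1 (n - k' - 1), psi n q ε) /
    (1 - (1 - ε) ^ n * δ)

/-- There exist `δ₀ ∈ (0,1)` and `ε₀ ∈ (0,1)` such that for all `δ ∈ (δ₀,1)` and
all `ε ∈ (0,ε₀)`, the incumbent `T_{n−1}` payoff strictly exceeds that of a single
defector mutant and that of every single more tolerant conditional cooperator
mutant `T_{k'}`, `k' ∈ {0,…,n−2}`: `T_{n−1}` is evolutionarily stable. -/
lemma psi_eval (j q : ℕ) (ε : ℝ) :
    psi j q ε = (bernsteinPolynomial ℝ j q).eval ε := by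
  simp [psi, bernsteinPolynomial]

lemma sum_psi (m : ℕ) (ε : ℝ) : ∑ q ∈ range (m + 1), psi m q ε = 1 := by
  simp only [psi_eval]
  rw [← Polynomial.eval_finset_sum, bernsteinPolynomial.sum]
  simp

lemma sum_q_psi (m : ℕ) (ε : ℝ) :
    ∑ q ∈ range (m + 1), (q : ℝ) * psi m q ε = m * ε := by
  have h := congrArg (Polynomial.eval ε) (bernsteinPolynomial.sum_smul ℝ m)
  simp only [Polynomial.eval_finset_sum, nsmul_eq_mul, Polynomial.eval_mul,
    Polynomial.eval_natCast, Polynomial.eval_X] at h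
  simpa [psi_eval] using h

lemma FD_eq (m : ℕ) (b ε : ℝ) : FD (m + 1) b ε = b * (m : ℝ) / (m + 1) * (1 - ε) := by
  have h1 := sum_psi m ε
  have h2 := sum_q_psi m ε
  have key : ∀ q ∈ range (m + 1),
      psi m q ε * (b * (((m : ℕ) + 1 : ℝ) - 1 - q) / ((m : ℕ) + 1)) =
      (b * m / (m + 1)) * psi m q ε - (b / (m + 1)) * ((q : ℝ) * psi m q ε) := by
    intro q _; ring
  rw [FD]
  simp only [Nat.add_sub_cancel, Nat.cast_add, Nat.cast_one]
  rw [Finset.sum_congr rfl key, Finset.sum_sub_distrib, ← Finset.mul_sum, ← Finset.mul_sum,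
    h1, h2]
  ring

lemma FC_eq (m : ℕ) (b c ε : ℝ) : FC (m + 1) b c ε = (1 - ε) * (b - c) := by
  have h1 := sum_psi m ε
  have h2 := sum_q_psi m ε
  have key1 : ∀ q ∈ range (m + 1),
      psi m q ε * (b * (((m : ℕ) + 1 : ℝ) - q) / ((m : ℕ) + 1) - c) =
      ((b - c) * psi m q ε - (b / (m + 1)) * ((q : ℝ) * psi m q ε)) := by
    intro q _
    have hm : ((m : ℝ) + 1) ≠ 0 := by positivity
    field_simp
    ring
  have key2 : ∀ q ∈ range (m + 1),
      psi m q ε * (b * (((m : ℕ) + 1 : ℝ) - 1 - q) / ((m : ℕ) + 1)) =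
      (b * m / (m + 1)) * psi m q ε - (b / (m + 1)) * ((q : ℝ) * psi m q ε) := by
    intro q _; ring
  rw [FC]
  simp only [Nat.add_sub_cancel, Nat.cast_add, Nat.cast_one]
  rw [Finset.sum_congr rfl key1, Finset.sum_congr rfl key2, Finset.sum_sub_distrib,
    Finset.sum_sub_distrib]
  simp only [← Finset.mul_sum]
  rw [h1, h2]
  have hm : ((m : ℝ) + 1) ≠ 0 := by positivity
  field_simp
  ring

theorem Tn1_evolutionarily_stable (n : ℕ) (hn : 2 ≤ n) (b c : ℝ)
    (hb0 : 0 < b / n) (hbc : b / n < c) (hcb : c < b) :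
    ∃ δ₀ : ℝ, 0 < δ₀ ∧ δ₀ < 1 ∧ ∃ ε₀ : ℝ, 0 < ε₀ ∧ ε₀ < 1 ∧
      ∀ δ : ℝ, δ₀ < δ → δ < 1 → ∀ ε : ℝ, 0 < ε → ε < ε₀ →
        Vincumbent n b c ε δ > VdefectorInv n b ε ∧
        ∀ k' : ℕ, k' ≤ n - 2 →
          Vincumbent n b c ε δ > VtolerantInv n k' b c ε δ := by
  obtain ⟨m, rfl⟩ : ∃ m, n = m + 1 := ⟨n - 1, by omega⟩
  have hm1 : 1 ≤ m := by omega
  have hmR : (1 : ℝ) ≤ (m : ℝ) := by exact_mod_cast hm1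
  have hnR : (0 : ℝ) < (m : ℝ) + 1 := by linarith
  have hcast : ((m + 1 : ℕ) : ℝ) = (m : ℝ) + 1 := by push_cast; ring
  have hb : 0 < b := by
    have h := hb0
    rw [hcast] at h
    have := mul_pos h hnR
    rwa [div_mul_cancel₀ b (ne_of_gt hnR)] at this
  set A : ℝ := b * (m : ℝ) / (m + 1) with hA_def
  have hA : 0 < A := by positivity
  have hbcA : b - c < A := by
    have : b / ((m : ℝ) + 1) < c := by
      have : ((m : ℕ) + 1 : ℝ) = (m : ℝ) + 1 := by push_cast; ring
      rw [← this]; exact_mod_cast hbc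
    have hA' : A = b - b / ((m : ℝ) + 1) := by
      have hm0 : ((m : ℝ) + 1) ≠ 0 := by positivity
      rw [hA_def, eq_sub_iff_add_eq, ← add_div, div_eq_iff hm0]; ring
    linarith
  set r : ℝ := (b - c) / A with hr_def
  have hr : 0 < r := div_pos (by linarith) hA
  set t : ℝ := min (r / 2) (1 / 2) with ht_def
  have ht0 : 0 < t := lt_min (by linarith) (by norm_num)
  have ht1 : t ≤ 1 / 2 := min_le_right _ _
  have htr : t ≤ r / 2 := min_le_left _ _
  refine ⟨1 - t / 2, by linarith, by linarith,
    t / (4 * ((m : ℝ) + 1)), by positivity, ?_, ?_⟩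
  · have : (1 : ℝ) ≤ 4 * ((m : ℝ) + 1) := by linarith
    calc t / (4 * ((m : ℝ) + 1)) ≤ t / 1 := by
          apply div_le_div_of_nonneg_left (le_of_lt ht0) one_pos this
      _ = t := div_one t
      _ < 1 := by linarith
  intro δ hδ₀ hδ1 ε hε0 hεu
  have hδ0 : 0 < δ := by linarith
  have hε1 : ε < 1 := by
    have : t / (4 * ((m : ℝ) + 1)) ≤ t := by
      calc t / (4 * ((m : ℝ) + 1)) ≤ t / 1 :=
        div_le_div_of_nonneg_left (le_of_lt ht0) one_pos (by linarith)
        _ = t := div_one t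
    linarith
  have h1ε : 0 < 1 - ε := by linarith
  have hnε : ((m : ℝ) + 1) * ε < t / 4 := by
    have h2 := mul_lt_mul_of_pos_left hεu hnR
    have h3 : ((m : ℝ) + 1) * (t / (4 * ((m : ℝ) + 1))) = t / 4 := by
      field_simp
    linarith
  have hBern : 1 - ((m : ℝ) + 1) * ε ≤ (1 - ε) ^ (m + 1) := by
    have := one_add_mul_le_pow (by linarith : (-2 : ℝ) ≤ -ε) (m + 1)
    have hc : ((m + 1 : ℕ) : ℝ) = (m : ℝ) + 1 := by push_cast; ring
    calc 1 - ((m : ℝ) + 1) * ε = 1 + ((m + 1 : ℕ) : ℝ) * (-ε) := by rw [hc]; ring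
      _ ≤ (1 + -ε) ^ (m + 1) := this
      _ = (1 - ε) ^ (m + 1) := by ring_nf
  have hpowlt : (1 - ε) ^ (m + 1) < 1 :=
    pow_lt_one₀ (by linarith) (by linarith) (by omega)
  have hpow0 : 0 < (1 - ε) ^ (m + 1) := by positivity
  have hD : 0 < 1 - (1 - ε) ^ (m + 1) * δ := by nlinarith
  have hDt : 1 - (1 - ε) ^ (m + 1) * δ < t := by nlinarith
  have hDr : (1 - (1 - ε) ^ (m + 1) * δ) * A < b - c := by
    have h1 : 1 - (1 - ε) ^ (m + 1) * δ < r := by linarith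
    calc (1 - (1 - ε) ^ (m + 1) * δ) * A < r * A := by
          exact mul_lt_mul_of_pos_right h1 hA
      _ = b - c := by rw [hr_def]; field_simp
  constructor
  · rw [Vincumbent, VdefectorInv, FC_eq, FD_eq, gt_iff_lt, ← hA_def, lt_div_iff₀ hD]
    have h := mul_lt_mul_of_pos_left hDr h1ε
    linarith [h]
  · intro k' hk'
    rw [Vincumbent, VtolerantInv, gt_iff_lt, div_lt_div_iff_of_pos_right hD]
    have hS : 0 < ∑ q ∈ Icc 1 (m + 1 - k' - 1), psi (m + 1) q ε := by
      apply Finset.sum_pos'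
      · intro q _
        unfold psi
        exact mul_nonneg (mul_nonneg (Nat.cast_nonneg _) (pow_nonneg hε0.le q))
          (pow_nonneg h1ε.le _)
      · refine ⟨1, ?_, ?_⟩
        · simp only [Finset.mem_Icc]
          omega
        · unfold psi
          have : ((m + 1).choose 1 : ℝ) = (m : ℝ) + 1 := by
            rw [Nat.choose_one_right]; push_cast; ring
          rw [this]
          exact mul_pos (mul_pos hnR (pow_pos hε0 1)) (pow_pos h1ε _)
    have hneg : δ * (1 - ε) * (b / ((m + 1 : ℕ) : ℝ) - c) *
        ∑ q ∈ Icc 1 (m + 1 - k' - 1), psi (m + 1) q ε < 0 := by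
      apply mul_neg_of_neg_of_pos _ hS
      apply mul_neg_of_pos_of_neg (mul_pos hδ0 h1ε)
      linarith [hbc]
    linarith [hneg]
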